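/- Let $k \geq 1$, $\alpha \geq -1/2$, and $x_1,\dots,x_k \geq 0$. Then $\Phi_2^{(k)}\!\left[\tfrac{1}{2k},\dots,\tfrac{1}{2k};\alpha+1;\tfrac{x_1}{2},\dots,\tfrac{x_k}{2}\right] \leq {}_1F_1\!\left[\tfrac{1}{2};\alpha+1;\tfrac{\|\mathbf{x}\|}{2}\right] \leq e^{\|\mathbf{x}\|/2}$, where $\|\mathbf{x}\| := \max_{1\leq j\leq k}|x_j|$. -/

import Mathlib

open scoped BigOperators
open MeasureTheory

/-- The rising factorial (Pochhammer symbol) `(a)_m = a (a+1) ⋯ (a+m-1)`. -/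
noncomputable def risingFactorial (a : ℝ) (m : ℕ) : ℝ := (ascPochhammer ℝ m).eval a

/-- The classical Laguerre polynomial `L_n^{(α)}(x)`. -/
noncomputable def laguerreP (n : ℕ) (α : ℝ) (x : ℝ) : ℝ :=
  risingFactorial (α + 1) n / (Nat.factorial n : ℝ) *
    ∑ j ∈ Finset.range (n + 1),
      risingFactorial (-(n : ℝ)) j / risingFactorial (α + 1) j * x ^ j / (Nat.factorial j : ℝ)

/-- Erdélyi's multivariate Laguerre polynomial `L_{n_1,…,n_k}^{(α)}(x_1,…,x_k)`. -/
noncomputable def mvLaguerre (k : ℕ) (α : ℝ) (n : Fin k → ℕ) (x : Fin k → ℝ) : ℝ :=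
  risingFactorial (α + 1) (∑ i, n i) / (∏ i, (Nat.factorial (n i) : ℝ)) *
    ∑ j ∈ Fintype.piFinset (fun i => Finset.range (n i + 1)),
      (∏ i, risingFactorial (-(n i : ℝ)) (j i)) / risingFactorial (α + 1) (∑ i, j i) *
        ∏ i, x i ^ (j i) / (Nat.factorial (j i) : ℝ)

/-- The confluent Lauricella function `Φ₂^{(k)}[b₁,…,b_k; c; x₁,…,x_k]`. -/
noncomputable def Phi2 (k : ℕ) (b : Fin k → ℝ) (c : ℝ) (x : Fin k → ℝ) : ℝ :=
  ∑' j : Fin k → ℕ,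
    (∏ i, risingFactorial (b i) (j i)) / risingFactorial c (∑ i, j i) *
      ∏ i, x i ^ (j i) / (Nat.factorial (j i) : ℝ)

/-- The confluent hypergeometric function `₁F₁[a; c; x]`. -/
noncomputable def oneF1 (a c x : ℝ) : ℝ :=
  ∑' j : ℕ, risingFactorial a j / risingFactorial c j * x ^ j / (Nat.factorial j : ℝ)

/-- Rooney's constant `q_n = √((2n)!) / (2^{n+1/2} n!)`. -/
noncomputable def qSeq (n : ℕ) : ℝ :=
  Real.sqrt (Nat.factorial (2 * n) : ℝ) /
    ((2 : ℝ) ^ ((n : ℝ) + 1 / 2) * (Nat.factorial n : ℝ))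

/-- The open standard simplex `E_k ⊆ ℝ^k`. -/
def simplexE (k : ℕ) : Set (Fin k → ℝ) := {u | (∀ i, 0 < u i) ∧ ∑ i, u i < 1}

/-- The density of the Dirichlet measure `μ_{(b₁,…,b_k,β)}` with respect to
Lebesgue measure on the simplex `E_k`. -/
noncomputable def dirichletDensity (k : ℕ) (b : Fin k → ℝ) (β : ℝ) (u : Fin k → ℝ) : ℝ :=
  Real.Gamma (∑ i, b i + β) / ((∏ i, Real.Gamma (b i)) * Real.Gamma β) *
    (∏ i, u i ^ (b i - 1)) * (1 - ∑ i, u i) ^ (β - 1)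

lemma rf_zero (a : ℝ) : risingFactorial a 0 = 1 := by
  simp [risingFactorial]

lemma rf_succ (a : ℝ) (n : ℕ) :
    risingFactorial a (n + 1) = risingFactorial a n * (a + n) := by
  simp [risingFactorial, ascPochhammer_succ_eval]

lemma rf_succ_left (a : ℝ) (n : ℕ) :
    risingFactorial a (n + 1) = a * risingFactorial (a + 1) n := by
  simp [risingFactorial, ascPochhammer_succ_left, Polynomial.eval_comp]

lemma rf_pos {a : ℝ} (ha : 0 < a) (n : ℕ) : 0 < risingFactorial a n := by
  induction n with
  | zero => simp [rf_zero]
  | succ n ih =>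
    rw [rf_succ]
    exact mul_pos ih (add_pos_of_pos_of_nonneg ha (Nat.cast_nonneg n))

lemma rf_mono {a b : ℝ} (ha : 0 < a) (hab : a ≤ b) (n : ℕ) :
    risingFactorial a n ≤ risingFactorial b n := by
  have hb : 0 < b := lt_of_lt_of_le ha hab
  induction n with
  | zero => simp [rf_zero]
  | succ n ih =>
    rw [rf_succ, rf_succ]
    have hn : (0:ℝ) ≤ (n:ℝ) := Nat.cast_nonneg n
    exact mul_le_mul ih (by linarith) (by linarith) (le_of_lt (rf_pos hb n))

lemma rf_vandermonde (a b : ℝ) : ∀ n : ℕ,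
    ∑ i ∈ Finset.range (n + 1),
        (n.choose i : ℝ) * (risingFactorial a i * risingFactorial b (n - i))
      = risingFactorial (a + b) n
  | 0 => by simp [rf_zero]
  | (n+1) => by
    have IH := rf_vandermonde a b n
    rw [Finset.sum_range_succ']
    have e1 : ∀ i ∈ Finset.range (n+1),
        (((n+1).choose (i+1) : ℕ) : ℝ) *
            (risingFactorial a (i+1) * risingFactorial b (n+1-(i+1)))
          = (n.choose i : ℝ) * (risingFactorial a (i+1) * risingFactorial b (n-i))
            + (n.choose (i+1) : ℝ) * (risingFactorial a (i+1) * risingFactorial b (n-i)) := by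
      intro i hi
      have h : n + 1 - (i+1) = n - i := by omega
      rw [h, Nat.choose_succ_succ]
      push_cast
      ring
    rw [Finset.sum_congr rfl e1, Finset.sum_add_distrib]
    have e2 : (∑ i ∈ Finset.range (n+1),
          (n.choose (i+1) : ℝ) * (risingFactorial a (i+1) * risingFactorial b (n-i)))
        + ((n+1).choose 0 : ℝ) * (risingFactorial a 0 * risingFactorial b (n+1-0))
        = ∑ i ∈ Finset.range (n+1),
            (n.choose i : ℝ) * (risingFactorial a i * risingFactorial b (n+1-i)) := by
      have h3 := Finset.sum_range_succ'
        (fun i => (n.choose i : ℝ) * (risingFactorial a i * risingFactorial b (n+1-i))) (n+1)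
      simp only [Nat.succ_sub_succ] at h3
      rw [Finset.sum_range_succ] at h3
      simp only [Nat.choose_succ_self, Nat.cast_zero, zero_mul, add_zero,
        Nat.choose_zero_right, Nat.cast_one, Nat.sub_zero] at h3 ⊢
      rw [h3]
    rw [add_assoc, e2, ← Finset.sum_add_distrib]
    have key : ∀ i ∈ Finset.range (n+1),
        (n.choose i : ℝ) * (risingFactorial a (i+1) * risingFactorial b (n - i))
          + (n.choose i : ℝ) * (risingFactorial a i * risingFactorial b (n + 1 - i))
        = (a + b + n) * ((n.choose i : ℝ) * (risingFactorial a i * risingFactorial b (n - i))) := by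
      intro i hi
      have hin : i ≤ n := Nat.lt_succ_iff.mp (Finset.mem_range.mp hi)
      have h1 : n + 1 - i = (n - i) + 1 := by omega
      rw [h1, rf_succ, rf_succ]
      have h2 : ((n - i : ℕ) : ℝ) = (n : ℝ) - i := Nat.cast_sub hin
      rw [h2]
      ring
    rw [Finset.sum_congr rfl key, ← Finset.mul_sum, IH, rf_succ]
    ring

lemma rf_vandermonde_div (a b : ℝ) (n : ℕ) :
    ∑ p ∈ Finset.HasAntidiagonal.antidiagonal n,
        risingFactorial a p.1 / (p.1.factorial : ℝ) * (risingFactorial b p.2 / (p.2.factorial : ℝ))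
      = risingFactorial (a + b) n / (n.factorial : ℝ) := by
  rw [Finset.Nat.sum_antidiagonal_eq_sum_range_succ_mk, ← rf_vandermonde a b n, Finset.sum_div]
  refine Finset.sum_congr rfl fun i hi => ?_
  have hin : i ≤ n := Nat.lt_succ_iff.mp (Finset.mem_range.mp hi)
  have hn : (n.factorial : ℝ) = (n.choose i : ℝ) * (i.factorial : ℝ) * ((n-i).factorial : ℝ) := by
    exact_mod_cast (Nat.choose_mul_factorial_mul_factorial hin).symm
  have h1 : (i.factorial : ℝ) ≠ 0 := Nat.cast_ne_zero.mpr (Nat.factorial_ne_zero i)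
  have h2 : ((n-i).factorial : ℝ) ≠ 0 := Nat.cast_ne_zero.mpr (Nat.factorial_ne_zero _)
  have h3 : (n.choose i : ℝ) ≠ 0 := Nat.cast_ne_zero.mpr (Nat.choose_pos hin).ne'
  rw [hn]
  field_simp

lemma rf_vandermonde_tuple (b : ℝ) : ∀ (k n : ℕ),
    ∑ j ∈ Finset.Nat.antidiagonalTuple k n,
        ∏ i, risingFactorial b (j i) / ((j i).factorial : ℝ)
      = risingFactorial ((k : ℝ) * b) n / (n.factorial : ℝ)
  | 0, 0 => by simp [rf_zero]
  | 0, (n+1) => by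
    simp [Finset.Nat.antidiagonalTuple_zero_succ, rf_succ_left]
  | (k+1), n => by
    have step : ∑ j ∈ Finset.Nat.antidiagonalTuple (k+1) n,
          ∏ i, risingFactorial b (j i) / ((j i).factorial : ℝ)
        = ∑ p ∈ Finset.HasAntidiagonal.antidiagonal n, ∑ t ∈ Finset.Nat.antidiagonalTuple k p.2,
            risingFactorial b p.1 / (p.1.factorial : ℝ) *
              ∏ i, risingFactorial b (t i) / ((t i).factorial : ℝ) := by
      rw [Finset.sum_sigma' (Finset.HasAntidiagonal.antidiagonal n)
        (fun p => Finset.Nat.antidiagonalTuple k p.2)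
        (fun p t => risingFactorial b p.1 / (p.1.factorial : ℝ) *
          ∏ i, risingFactorial b (t i) / ((t i).factorial : ℝ))]
      refine Finset.sum_nbij'
        (fun (j : Fin (k+1) → ℕ) =>
          (⟨(j 0, ∑ i : Fin k, j i.succ), Fin.tail j⟩ : (p : ℕ × ℕ) × (Fin k → ℕ)))
        (fun p => Fin.cons p.1.1 p.2) ?_ ?_ ?_ ?_ ?_
      · intro j hj
        have hsum : ∑ i, j i = n := Finset.Nat.mem_antidiagonalTuple.mp hj
        refine Finset.mem_sigma.mpr ⟨Finset.HasAntidiagonal.mem_antidiagonal.mpr ?_, ?_⟩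
        · rw [← hsum, Fin.sum_univ_succ]
        · exact Finset.Nat.mem_antidiagonalTuple.mpr rfl
      · rintro ⟨⟨p1, p2⟩, t⟩ hp
        obtain ⟨hp1, hp2⟩ := Finset.mem_sigma.mp hp
        have ht : ∑ i, t i = p2 := Finset.Nat.mem_antidiagonalTuple.mp hp2
        refine Finset.Nat.mem_antidiagonalTuple.mpr ?_
        rw [Fin.sum_univ_succ]
        simp only [Fin.cons_zero, Fin.cons_succ]
        rw [ht]
        exact Finset.HasAntidiagonal.mem_antidiagonal.mp hp1
      · intro j hj
        exact Fin.cons_self_tail j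
      · rintro ⟨⟨p1, p2⟩, t⟩ hp
        obtain ⟨hp1, hp2⟩ := Finset.mem_sigma.mp hp
        have ht : ∑ i, t i = p2 := Finset.Nat.mem_antidiagonalTuple.mp hp2
        simp only [Fin.cons_zero, Fin.cons_succ, Fin.tail_cons]
        congr 1
        rw [ht]
      · intro j hj
        simp only
        rw [Fin.prod_univ_succ]
        rfl
    rw [step]
    have e : ∀ p ∈ Finset.HasAntidiagonal.antidiagonal n,
        (∑ t ∈ Finset.Nat.antidiagonalTuple k p.2,
            risingFactorial b p.1 / (p.1.factorial : ℝ) *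
              ∏ i, risingFactorial b (t i) / ((t i).factorial : ℝ))
        = risingFactorial b p.1 / (p.1.factorial : ℝ) *
            (risingFactorial ((k : ℝ) * b) p.2 / (p.2.factorial : ℝ)) := by
      intro p _
      rw [← Finset.mul_sum, rf_vandermonde_tuple b k p.2]
    rw [Finset.sum_congr rfl e, rf_vandermonde_div]
    have : b + (k : ℝ) * b = ((k+1 : ℕ) : ℝ) * b := by push_cast; ring
    rw [this]

/-- Inequality (3.3): the Lauricella function `Φ₂^{(k)}[1/(2k),…,1/(2k); α+1; x/2]` is
bounded by `₁F₁[1/2; α+1; ‖x‖/2] ≤ exp(‖x‖/2)`. -/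
theorem Phi2_le_oneF1_le_exp' (k : ℕ) (hk : 1 ≤ k) (α : ℝ) (hα : -(1 / 2) ≤ α)
    (x : Fin k → ℝ) (hx : ∀ i, 0 ≤ x i) :
    Phi2 k (fun _ => 1 / (2 * (k : ℝ))) (α + 1) (fun i => x i / 2) ≤
        oneF1 (1 / 2) (α + 1) ((⨆ i, |x i|) / 2) ∧
      oneF1 (1 / 2) (α + 1) ((⨆ i, |x i|) / 2) ≤ Real.exp ((⨆ i, |x i|) / 2) := by
  have hk0 : (0:ℝ) < k := by exact_mod_cast hk
  have hc : (0:ℝ) < α + 1 := by linarith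
  have hhalf : (1:ℝ)/2 ≤ α + 1 := by linarith
  haveI : Nonempty (Fin k) := ⟨⟨0, hk⟩⟩
  set M : ℝ := ⨆ i, |x i| with hM
  have hbdd : BddAbove (Set.range fun i => |x i|) := Set.Finite.bddAbove (Set.finite_range _)
  have hxM : ∀ i, x i ≤ M := fun i => (le_abs_self _).trans (le_ciSup hbdd i)
  have hM0 : 0 ≤ M :=
    le_trans (abs_nonneg _) (le_ciSup hbdd (Classical.arbitrary _))
  set b : ℝ := 1 / (2 * (k:ℝ)) with hb
  have hbpos : 0 < b := by rw [hb]; positivity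
  have hkb : (k:ℝ) * b = 1/2 := by
    rw [hb]; field_simp
  set g : ℕ → ℝ := fun n =>
    risingFactorial (1/2) n / risingFactorial (α+1) n * (M/2)^n / (n.factorial : ℝ) with hgdef
  have hg_nonneg : ∀ n, 0 ≤ g n := by
    intro n
    have h1 := rf_pos (show (0:ℝ) < 1/2 by norm_num) n
    have h2 := rf_pos hc n
    have h3 : (0:ℝ) ≤ (M/2)^n := by positivity
    have h4 : (0:ℝ) < (n.factorial : ℝ) := by positivity
    rw [hgdef]
    positivity
  have hg_le : ∀ n, g n ≤ (M/2)^n / (n.factorial : ℝ) := by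
    intro n
    have h1 : risingFactorial (1/2) n / risingFactorial (α+1) n ≤ 1 :=
      (div_le_one (rf_pos hc n)).mpr (rf_mono (by norm_num) hhalf n)
    have h2 : (0:ℝ) ≤ (M/2)^n / (n.factorial : ℝ) := by positivity
    calc g n = risingFactorial (1/2) n / risingFactorial (α+1) n * ((M/2)^n / (n.factorial:ℝ)) := by
          rw [hgdef]; ring
      _ ≤ 1 * ((M/2)^n / (n.factorial:ℝ)) := mul_le_mul_of_nonneg_right h1 h2
      _ = (M/2)^n / (n.factorial:ℝ) := one_mul _
  have hexp_summable := Real.summable_pow_div_factorial (M/2)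
  have hg_summable : Summable g := Summable.of_nonneg_of_le hg_nonneg hg_le hexp_summable
  have hone : oneF1 (1/2) (α+1) (M/2) = ∑' n, g n := rfl
  constructor
  · -- first inequality
    rw [show ((⨆ i, |x i|) / 2) = M / 2 from rfl, hone]
    set f : (Fin k → ℕ) → ℝ := fun j =>
      (∏ i, risingFactorial b (j i)) / risingFactorial (α+1) (∑ i, j i) *
        ∏ i, (x i / 2) ^ (j i) / ((j i).factorial : ℝ) with hfdef
    have hf_nonneg : ∀ j, 0 ≤ f j := by
      intro j
      have h1 : 0 ≤ ∏ i, risingFactorial b (j i) :=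
        Finset.prod_nonneg fun i _ => (rf_pos hbpos _).le
      have h2 : 0 < risingFactorial (α+1) (∑ i, j i) := rf_pos hc _
      have h3 : 0 ≤ ∏ i, (x i / 2) ^ (j i) / ((j i).factorial : ℝ) := by
        refine Finset.prod_nonneg fun i _ => ?_
        have := hx i
        positivity
      exact mul_nonneg (div_nonneg h1 h2.le) h3
    have hfiber : ∀ n : ℕ, ∑ j ∈ Finset.Nat.antidiagonalTuple k n, f j ≤ g n := by
      intro n
      have hA : ∀ j ∈ Finset.Nat.antidiagonalTuple k n,
          f j ≤ (M/2)^n / risingFactorial (α+1) n *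
            ∏ i, risingFactorial b (j i) / ((j i).factorial : ℝ) := by
        intro j hj
        have hsum : ∑ i, j i = n := Finset.Nat.mem_antidiagonalTuple.mp hj
        have hQ : ∏ i, (x i / 2) ^ (j i) ≤ (M/2)^n := by
          rw [← hsum, ← Finset.prod_pow_eq_pow_sum]
          refine Finset.prod_le_prod (fun i _ => by have := hx i; positivity)
            (fun i _ => ?_)
          exact pow_le_pow_left₀ (by have := hx i; linarith)
            (by have := hxM i; linarith) _
        have hrc : 0 < risingFactorial (α+1) n := rf_pos hc n
        have hP : (0:ℝ) < ∏ i, ((j i).factorial : ℝ) :=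
          Finset.prod_pos fun i _ => by positivity
        have hApos : 0 ≤ ∏ i, risingFactorial b (j i) :=
          Finset.prod_nonneg fun i _ => (rf_pos hbpos _).le
        have e1 : f j = (∏ i, (x i / 2) ^ (j i)) *
            ((∏ i, risingFactorial b (j i)) /
              (risingFactorial (α+1) n * ∏ i, ((j i).factorial : ℝ))) := by
          rw [hfdef]
          simp only
          rw [hsum, Finset.prod_div_distrib]
          ring
        have e2 : (M/2)^n / risingFactorial (α+1) n *
            ∏ i, risingFactorial b (j i) / ((j i).factorial : ℝ)
            = (M/2)^n * ((∏ i, risingFactorial b (j i)) /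
              (risingFactorial (α+1) n * ∏ i, ((j i).factorial : ℝ))) := by
          rw [Finset.prod_div_distrib]
          ring
        rw [e1, e2]
        exact mul_le_mul_of_nonneg_right hQ (by positivity)
      calc ∑ j ∈ Finset.Nat.antidiagonalTuple k n, f j
          ≤ ∑ j ∈ Finset.Nat.antidiagonalTuple k n,
              (M/2)^n / risingFactorial (α+1) n *
                ∏ i, risingFactorial b (j i) / ((j i).factorial : ℝ) :=
            Finset.sum_le_sum hA
        _ = (M/2)^n / risingFactorial (α+1) n *
              (risingFactorial ((k:ℝ) * b) n / (n.factorial : ℝ)) := by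
            rw [← Finset.mul_sum, rf_vandermonde_tuple]
        _ = g n := by rw [hkb, hgdef]; ring
    have hPhi : Phi2 k (fun _ => b) (α + 1) (fun i => x i / 2) = ∑' j, f j := rfl
    rw [hPhi]
    refine tsum_le_of_sum_le' (tsum_nonneg hg_nonneg) ?_
    intro S
    classical
    set N := S.sup (fun j => ∑ i, j i) with hN
    have hsub : S ⊆ (Finset.range (N+1)).biUnion
        (fun n => Finset.Nat.antidiagonalTuple k n) := by
      intro j hj
      exact Finset.mem_biUnion.mpr ⟨∑ i, j i,
        Finset.mem_range.mpr (Nat.lt_succ_of_le (Finset.le_sup hj)),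
        Finset.Nat.mem_antidiagonalTuple.mpr rfl⟩
    have hdisj : (↑(Finset.range (N+1)) : Set ℕ).PairwiseDisjoint
        (fun n => Finset.Nat.antidiagonalTuple k n) := by
      intro m _ n _ hmn
      refine Finset.disjoint_left.mpr fun j hjm hjn => hmn ?_
      rw [← Finset.Nat.mem_antidiagonalTuple.mp hjm,
        ← Finset.Nat.mem_antidiagonalTuple.mp hjn]
    calc ∑ j ∈ S, f j
        ≤ ∑ j ∈ (Finset.range (N+1)).biUnion (fun n => Finset.Nat.antidiagonalTuple k n), f j :=
          Finset.sum_le_sum_of_subset_of_nonneg hsub (fun j _ _ => hf_nonneg j)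
      _ = ∑ n ∈ Finset.range (N+1), ∑ j ∈ Finset.Nat.antidiagonalTuple k n, f j :=
          Finset.sum_biUnion hdisj
      _ ≤ ∑ n ∈ Finset.range (N+1), g n := Finset.sum_le_sum (fun n _ => hfiber n)
      _ ≤ ∑' n, g n := Summable.sum_le_tsum _ (fun n _ => hg_nonneg n) hg_summable
  · rw [show ((⨆ i, |x i|) / 2) = M / 2 from rfl, hone]
    have hexp : Real.exp (M/2) = ∑' n : ℕ, (M/2)^n / (n.factorial : ℝ) := by
      rw [Real.exp_eq_exp_ℝ, NormedSpace.exp_eq_tsum_div]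
    rw [hexp]
    exact Summable.tsum_le_tsum hg_le hg_summable hexp_summable
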